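/- arXiv:1808.10211 — 2 statements merged into one kernel-verified Lean document; each statement's English description precedes it below -/
import Mathlib

section
/- Let A : [0,∞) → [0,∞) be a nondecreasing, right-continuous, subadditive function with A(0) = 0 such that sup_{t>0} A(t)/t < ∞. Then lim_{α→∞} α² ∫₀^∞ e^{−αt} A(t) dt = sup_{t>0} A(t)/t. -/
open Filter MeasureTheory Set Topology

lemma abel_aux {α : ℝ} (hα : 0 < α) (δ : ℝ) (hδ : 0 ≤ δ) :
    IntegrableOn (fun t : ℝ => Real.exp (-(α * t)) * t) (Ioi δ) ∧
    ∫ t in Ioi δ, Real.exp (-(α * t)) * t = (δ / α + 1 / α ^ 2) * Real.exp (-(α * δ)) := by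
  have hαne : α ≠ 0 := hα.ne'
  have hderiv : ∀ x ∈ Ici δ, HasDerivAt (fun t : ℝ => -(t / α + 1 / α ^ 2) * Real.exp (-(α * t)))
      (Real.exp (-(α * x)) * x) x := by
    intro x _
    have h2 : HasDerivAt (fun t : ℝ => Real.exp (-(α * t))) (Real.exp (-(α * x)) * -α) x := by
      have hin : HasDerivAt (fun t : ℝ => -(α * t)) (-α) x := by
        simpa using ((hasDerivAt_id x).const_mul α).fun_neg
      exact (Real.hasDerivAt_exp (-(α * x))).comp x hin
    have h1 : HasDerivAt (fun t : ℝ => -(t / α + 1 / α ^ 2)) (-(1 / α)) x := by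
      have := (((hasDerivAt_id' x).div_const α).add_const (1 / α ^ 2)).fun_neg
      exact this
    have := h1.fun_mul h2
    refine this.congr_deriv ?_
    field_simp
    ring
  have g'pos : ∀ x ∈ Ioi δ, 0 ≤ Real.exp (-(α * x)) * x := by
    intro x hx
    have : (0:ℝ) < x := lt_of_le_of_lt hδ hx
    positivity
  have htend : Tendsto (fun t : ℝ => -(t / α + 1 / α ^ 2) * Real.exp (-(α * t))) atTop (𝓝 0) := by
    have hat : Tendsto (fun t : ℝ => α * t) atTop atTop := tendsto_id.const_mul_atTop hα
    have h1 : Tendsto (fun t : ℝ => (α * t) ^ 1 * Real.exp (-(α * t))) atTop (𝓝 0) :=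
      (Real.tendsto_pow_mul_exp_neg_atTop_nhds_zero 1).comp hat
    have h2 : Tendsto (fun t : ℝ => Real.exp (-(α * t))) atTop (𝓝 0) := by
      exact Real.tendsto_exp_atBot.comp (tendsto_neg_atBot_iff.mpr hat)
    have h3 := ((h1.const_mul (1 / α ^ 2)).add (h2.const_mul (1 / α ^ 2))).neg
    have heq : ∀ t : ℝ, -(1 / α ^ 2 * ((α * t) ^ 1 * Real.exp (-(α * t))) +
        1 / α ^ 2 * Real.exp (-(α * t))) = -(t / α + 1 / α ^ 2) * Real.exp (-(α * t)) := by
      intro t; field_simp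
    simpa [heq] using h3.congr heq
  constructor
  · exact integrableOn_Ioi_deriv_of_nonneg' hderiv g'pos htend
  · have := integral_Ioi_of_hasDerivAt_of_nonneg' hderiv g'pos htend
    rw [this]
    ring

/-- For a nondecreasing, right-continuous, subadditive `A : [0,∞) → [0,∞)` with `A 0 = 0`
and `sup_{t>0} A t / t < ∞`, the Abelian limit
`lim_{α→∞} α² ∫₀^∞ e^{−αt} A t dt = sup_{t>0} A t / t` holds. -/
theorem stmt_2 (A : ℝ → ℝ) (h0 : A 0 = 0)
    (hmono : ∀ s t, 0 ≤ s → s ≤ t → A s ≤ A t)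
    (hrc : ∀ t, 0 ≤ t → ContinuousWithinAt A (Ici t) t)
    (hsub : ∀ s t, 0 ≤ s → 0 ≤ t → A (s + t) ≤ A s + A t)
    (hbdd : BddAbove {r : ℝ | ∃ t, 0 < t ∧ r = A t / t}) :
    Tendsto (fun α : ℝ => α ^ 2 * ∫ t in Ioi (0 : ℝ), Real.exp (-(α * t)) * A t) atTop
      (nhds (sSup {r : ℝ | ∃ t, 0 < t ∧ r = A t / t})) := by
  set S := {r : ℝ | ∃ t, 0 < t ∧ r = A t / t} with hSdef
  have hSne : S.Nonempty := ⟨A 1 / 1, 1, one_pos, rfl⟩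
  set L := sSup S with hLdef
  have hA0 : ∀ t : ℝ, 0 ≤ t → 0 ≤ A t := fun t ht => h0 ▸ hmono 0 t le_rfl ht
  have hle : ∀ t : ℝ, 0 < t → A t ≤ L * t := by
    intro t ht
    have h1 : A t / t ≤ L := le_csSup hbdd ⟨t, ht, rfl⟩
    have := mul_le_mul_of_nonneg_right h1 ht.le
    rwa [div_mul_cancel₀ _ ht.ne'] at this
  -- subadditivity iterated
  have hnmul : ∀ n : ℕ, ∀ t : ℝ, 0 ≤ t → A (n * t) ≤ n * A t := by
    intro n
    induction n with
    | zero => intro t _; simp [h0]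
    | succ n ih =>
      intro t ht
      have he : ((n:ℝ) + 1) * t = (n:ℝ) * t + t := by ring
      calc A ((n + 1 : ℕ) * t) = A ((n:ℝ) * t + t) := by push_cast; rw [he]
        _ ≤ A ((n:ℝ) * t) + A t := hsub _ _ (by positivity) ht
        _ ≤ n * A t + A t := by linarith [ih t ht]
        _ = ((n:ℕ) + 1 : ℝ) * A t := by ring
        _ = ((n + 1 : ℕ) : ℝ) * A t := by push_cast; ring
  -- key subadditive comparison
  have hkey : ∀ s t : ℝ, 0 < s → 0 < t → A s * t ≤ A t * (s + t) := by
    intro s t hs ht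
    set n := ⌊s / t⌋₊ with hn
    have hst : 0 ≤ s / t := by positivity
    have h1 : (n : ℝ) * t ≤ s := by
      have := Nat.floor_le hst
      calc (n:ℝ) * t ≤ (s / t) * t := by
            exact mul_le_mul_of_nonneg_right this ht.le
        _ = s := by field_simp
    have h2 : s < ((n:ℝ) + 1) * t := by
      have := Nat.lt_succ_floor (s / t)
      have h3 : s / t < (n:ℝ) + 1 := by exact_mod_cast this
      calc s = (s / t) * t := by field_simp
        _ < ((n:ℝ) + 1) * t := by exact mul_lt_mul_of_pos_right h3 ht
    have hr0 : 0 ≤ s - (n:ℝ) * t := by linarith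
    have hr1 : s - (n:ℝ) * t ≤ t := by nlinarith
    have hAs : A s ≤ ((n:ℝ) + 1) * A t := by
      have he : s = (n:ℝ) * t + (s - (n:ℝ) * t) := by ring
      calc A s = A ((n:ℝ) * t + (s - (n:ℝ) * t)) := by rw [← he]
        _ ≤ A ((n:ℝ) * t) + A (s - (n:ℝ) * t) := hsub _ _ (by positivity) hr0
        _ ≤ (n:ℝ) * A t + A t := add_le_add (hnmul n t ht.le) (hmono _ _ hr0 hr1)
        _ = ((n:ℝ) + 1) * A t := by ring
    nlinarith [mul_le_mul_of_nonneg_right hAs ht.le,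
      mul_le_mul_of_nonneg_left h1 (hA0 t ht.le), hA0 t ht.le]
  -- near-optimal slope on small intervals
  have hδlem : ∀ ε : ℝ, 0 < ε → ∃ δ : ℝ, 0 < δ ∧ ∀ t, 0 < t → t ≤ δ → (L - ε) * t ≤ A t := by
    intro ε hε
    obtain ⟨r, hrS, hr⟩ := exists_lt_of_lt_csSup hSne (show L - ε/2 < L by linarith)
    obtain ⟨s, hs, rfl⟩ := hrS
    refine ⟨ε * s / (2 * (|L| + 1)), by positivity, fun t ht htδ => ?_⟩
    have hAs : (L - ε/2) * s < A s := by
      rw [lt_div_iff₀ hs] at hr; linarith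
    have hk := hkey s t hs ht
    have h5 : (L - ε) * t ≤ ε * s / 2 := by
      have hL1 : L - ε ≤ |L| + 1 := by
        have := le_abs_self L; linarith
      have h6 : (L - ε) * t ≤ (|L| + 1) * t := mul_le_mul_of_nonneg_right hL1 ht.le
      have h7 : (|L| + 1) * t ≤ (|L| + 1) * (ε * s / (2 * (|L| + 1))) :=
        mul_le_mul_of_nonneg_left htδ (by positivity)
      have h8 : (|L| + 1) * (ε * s / (2 * (|L| + 1))) = ε * s / 2 := by
        field_simp
      linarith
    have hstpos : (0:ℝ) < s + t := by linarith
    have hprod : (L - ε) * t * (s + t) ≤ A t * (s + t) := by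
      nlinarith [mul_le_mul_of_nonneg_right hAs.le ht.le,
        mul_le_mul_of_nonneg_right h5 ht.le]
    exact le_of_mul_le_mul_right (by linarith [hprod]) hstpos
  -- measurability
  set B : ℝ → ℝ := fun t => A (max t 0) with hBdef
  have hBmono : Monotone B := fun s t hst =>
    hmono _ _ (le_max_right s 0) (max_le_max hst le_rfl)
  have hBmeas : Measurable B := hBmono.measurable
  have hmeasA : ∀ α : ℝ, AEStronglyMeasurable (fun t => Real.exp (-(α * t)) * A t)
      (volume.restrict (Ioi (0:ℝ))) := by
    intro α
    have hB : AEStronglyMeasurable (fun t => Real.exp (-(α * t)) * B t)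
        (volume.restrict (Ioi (0:ℝ))) :=
      ((Real.measurable_exp.comp ((measurable_const.mul measurable_id).neg)).mul
        hBmeas).aestronglyMeasurable
    apply hB.congr
    filter_upwards [ae_restrict_mem measurableSet_Ioi] with t ht
    have : max t 0 = t := max_eq_left (le_of_lt ht)
    simp [hBdef, this]
  -- integrability of the main integrand
  have hintA : ∀ α : ℝ, 0 < α →
      IntegrableOn (fun t => Real.exp (-(α * t)) * A t) (Ioi (0:ℝ)) := by
    intro α hα
    obtain ⟨hint1, _⟩ := abel_aux hα 0 le_rfl
    refine Integrable.mono (hint1.const_mul (|L| + 1)) (hmeasA α) ?_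
    filter_upwards [ae_restrict_mem measurableSet_Ioi] with t ht
    have ht' : (0:ℝ) < t := ht
    have h1 := hle t ht'
    have h2 := hA0 t ht'.le
    have hexp := Real.exp_pos (-(α * t))
    rw [Real.norm_eq_abs, Real.norm_eq_abs, abs_of_nonneg (mul_nonneg hexp.le h2),
      abs_of_nonneg (mul_nonneg (by positivity) (mul_nonneg hexp.le ht'.le))]
    have hLt : L * t ≤ (|L| + 1) * t :=
      mul_le_mul_of_nonneg_right (by linarith [le_abs_self L]) ht'.le
    have h3 : A t ≤ (|L| + 1) * t := by linarith
    nlinarith [mul_le_mul_of_nonneg_left h3 hexp.le]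
  -- upper bound
  have hub : ∀ α : ℝ, 0 < α →
      α ^ 2 * ∫ t in Ioi (0:ℝ), Real.exp (-(α * t)) * A t ≤ L := by
    intro α hα
    obtain ⟨hint1, he1⟩ := abel_aux hα 0 le_rfl
    have hmono' : (∫ t in Ioi (0:ℝ), Real.exp (-(α * t)) * A t)
        ≤ ∫ t in Ioi (0:ℝ), L * (Real.exp (-(α * t)) * t) := by
      apply integral_mono_ae (hintA α hα) (hint1.const_mul L)
      filter_upwards [ae_restrict_mem measurableSet_Ioi] with t ht
      have h1 := hle t ht
      have hexp := (Real.exp_pos (-(α * t))).le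
      nlinarith
    have he2 : ∫ t in Ioi (0:ℝ), L * (Real.exp (-(α * t)) * t) = L * (1 / α ^ 2) := by
      rw [integral_const_mul, he1]
      simp
    have hα2 : (0:ℝ) < α ^ 2 := by positivity
    calc α ^ 2 * ∫ t in Ioi (0:ℝ), Real.exp (-(α * t)) * A t
        ≤ α ^ 2 * (L * (1 / α ^ 2)) := by
          rw [← he2]; exact mul_le_mul_of_nonneg_left (by rw [he2] at hmono' ⊢; linarith [hmono']) hα2.le
      _ = L := by field_simp
  -- lower bound
  have hlb : ∀ ε > (0:ℝ), ∀ δ > (0:ℝ), (∀ t, 0 < t → t ≤ δ → (L - ε) * t ≤ A t) →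
      ∀ α : ℝ, 0 < α →
      (L - ε) * (1 - (α * δ + 1) * Real.exp (-(α * δ)))
        ≤ α ^ 2 * ∫ t in Ioi (0:ℝ), Real.exp (-(α * t)) * A t := by
    intro ε hε δ hδ hδA α hα
    obtain ⟨i1, e1⟩ := abel_aux hα 0 le_rfl
    obtain ⟨i2, e2⟩ := abel_aux hα δ hδ.le
    have iA := hintA α hα
    have iIoc : IntegrableOn (fun t => Real.exp (-(α * t)) * t) (Ioc (0:ℝ) δ) :=
      i1.mono_set Ioc_subset_Ioi_self
    have iAIoc : IntegrableOn (fun t => Real.exp (-(α * t)) * A t) (Ioc (0:ℝ) δ) :=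
      iA.mono_set Ioc_subset_Ioi_self
    -- split the reference integral
    have hsplit : ∫ t in Ioi (0:ℝ), Real.exp (-(α * t)) * t
        = (∫ t in Ioc (0:ℝ) δ, Real.exp (-(α * t)) * t)
          + ∫ t in Ioi δ, Real.exp (-(α * t)) * t := by
      rw [← setIntegral_union (Ioc_disjoint_Ioi le_rfl) measurableSet_Ioi iIoc i2,
        Ioc_union_Ioi_eq_Ioi hδ.le]
    have eIoc : ∫ t in Ioc (0:ℝ) δ, Real.exp (-(α * t)) * t
        = 1 / α ^ 2 - (δ / α + 1 / α ^ 2) * Real.exp (-(α * δ)) := by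
      have : (0 / α + 1 / α ^ 2) * Real.exp (-(α * 0)) = 1 / α ^ 2 := by simp
      rw [e1, this] at hsplit
      rw [e2] at hsplit
      linarith
    -- pointwise bound on Ioc
    have step2 : (L - ε) * ∫ t in Ioc (0:ℝ) δ, Real.exp (-(α * t)) * t
        ≤ ∫ t in Ioc (0:ℝ) δ, Real.exp (-(α * t)) * A t := by
      rw [← integral_const_mul]
      apply setIntegral_mono_on (iIoc.const_mul _) iAIoc measurableSet_Ioc
      intro t ht
      have h := mul_le_mul_of_nonneg_left (hδA t ht.1 ht.2) (Real.exp_pos (-(α * t))).le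
      nlinarith [h]
    -- drop the tail
    have step1 : (∫ t in Ioc (0:ℝ) δ, Real.exp (-(α * t)) * A t)
        ≤ ∫ t in Ioi (0:ℝ), Real.exp (-(α * t)) * A t := by
      apply setIntegral_mono_set iA
      · filter_upwards [ae_restrict_mem measurableSet_Ioi] with t ht
        have := hA0 t ht.le
        have := (Real.exp_pos (-(α * t))).le
        positivity
      · exact HasSubset.Subset.eventuallyLE Ioc_subset_Ioi_self
    have hα2 : (0:ℝ) < α ^ 2 := by positivity
    have hchain : (L - ε) * (1 / α ^ 2 - (δ / α + 1 / α ^ 2) * Real.exp (-(α * δ)))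
        ≤ ∫ t in Ioi (0:ℝ), Real.exp (-(α * t)) * A t := by
      rw [← eIoc]; linarith
    have hfinal := mul_le_mul_of_nonneg_left hchain hα2.le
    have hring : α ^ 2 * ((L - ε) * (1 / α ^ 2 - (δ / α + 1 / α ^ 2) * Real.exp (-(α * δ))))
        = (L - ε) * (1 - (α * δ + 1) * Real.exp (-(α * δ))) := by
      field_simp
    linarith [hring ▸ hfinal]
  -- conclude
  rw [Metric.tendsto_nhds]
  intro ε hε
  obtain ⟨δ, hδ, hδA⟩ := hδlem (ε/2) (by linarith)
  have hh : Tendsto (fun α : ℝ => (L - ε/2) * (1 - (α * δ + 1) * Real.exp (-(α * δ)))) atTop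
      (𝓝 (L - ε/2)) := by
    have hat : Tendsto (fun α : ℝ => α * δ) atTop atTop :=
      tendsto_id.atTop_mul_const hδ
    have h1 : Tendsto (fun α : ℝ => (α * δ) ^ 1 * Real.exp (-(α * δ))) atTop (𝓝 0) :=
      (Real.tendsto_pow_mul_exp_neg_atTop_nhds_zero 1).comp hat
    have h2 : Tendsto (fun α : ℝ => Real.exp (-(α * δ))) atTop (𝓝 0) :=
      Real.tendsto_exp_atBot.comp (tendsto_neg_atBot_iff.mpr hat)
    have h3 : Tendsto (fun α : ℝ => (α * δ + 1) * Real.exp (-(α * δ))) atTop (𝓝 0) := by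
      have := h1.add h2
      simp only [pow_one] at this
      have heq : ∀ α : ℝ, α * δ * Real.exp (-(α * δ)) + Real.exp (-(α * δ))
          = (α * δ + 1) * Real.exp (-(α * δ)) := by intro α; ring
      simpa [heq] using this.congr heq
    have h4 : Tendsto (fun α : ℝ => 1 - (α * δ + 1) * Real.exp (-(α * δ))) atTop (𝓝 1) := by
      simpa using (tendsto_const_nhds (x := (1:ℝ)) (f := atTop)).sub h3
    simpa using h4.const_mul (L - ε/2)
  have hev : ∀ᶠ α in atTop, L - ε < (L - ε/2) * (1 - (α * δ + 1) * Real.exp (-(α * δ))) :=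
    hh.eventually (eventually_gt_nhds (by linarith))
  filter_upwards [hev, eventually_gt_atTop (0:ℝ)] with α hα1 hα0
  have h1 := hub α hα0
  have h2 := hlb (ε/2) (by linarith) δ hδ hδA α hα0
  rw [Real.dist_eq, abs_lt]
  constructor <;> linarith
end

section
/- Let A : [0,∞) → [0,∞) be nondecreasing, right-continuous, subadditive with A(0) = 0, and let α ↦ ∫₀^∞ e^{−αt} dA(t) denote the Laplace–Stieltjes transform of A. If sup_{t>0} A(t)/t < ∞ then lim_{α→∞} α ∫₀^∞ e^{−αt} dA(t) = sup_{t>0} A(t)/t. -/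
open Filter MeasureTheory Set

private lemma stieltjes_iter (A : StieltjesFunction ℝ)
    (hsub : ∀ s t, 0 ≤ s → 0 ≤ t → A (s + t) ≤ A s + A t) :
    ∀ n : ℕ, ∀ v r : ℝ, 0 ≤ v → 0 ≤ r → A (n * v + r) ≤ n * A v + A r := by
  intro n
  induction n with
  | zero => intro v r hv hr; simp
  | succ n ih =>
    intro v r hv hr
    have h1 : (((n : ℕ) + 1 : ℕ) : ℝ) * v + r = v + ((n : ℝ) * v + r) := by push_cast; ring
    rw [h1]
    have h2 := hsub v ((n : ℝ) * v + r) hv (by positivity)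
    have h3 := ih v r hv hr
    push_cast
    linarith

/-- Laplace–Stieltjes version: for a nondecreasing right-continuous `A` (a Stieltjes
function) vanishing on `(−∞,0]`, subadditive on `[0,∞)`, with `sup_{t>0} A t / t < ∞`,
one has `lim_{α→∞} α ∫₀^∞ e^{−αt} dA(t) = sup_{t>0} A t / t`. -/
theorem stmt_3 (A : StieltjesFunction ℝ) (h0 : A 0 = 0)
    (hneg : ∀ t : ℝ, t ≤ 0 → A t = 0)
    (hsub : ∀ s t, 0 ≤ s → 0 ≤ t → A (s + t) ≤ A s + A t)
    (hbdd : BddAbove {r : ℝ | ∃ t, 0 < t ∧ r = A t / t}) :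
    Tendsto (fun α : ℝ => α * ∫ t in Ioi (0 : ℝ), Real.exp (-(α * t)) ∂A.measure) atTop
      (nhds (sSup {r : ℝ | ∃ t, 0 < t ∧ r = A t / t})) := by
  set S : Set ℝ := {r : ℝ | ∃ t, 0 < t ∧ r = A t / t} with hS
  set L : ℝ := sSup S with hLdef
  have hS1 : A 1 / 1 ∈ S := ⟨1, one_pos, rfl⟩
  have hA0 : ∀ t : ℝ, 0 ≤ A t := by
    intro t
    rcases le_or_gt t 0 with h | h
    · rw [hneg t h]
    · rw [← h0]; exact A.mono h.le
  have hL0 : 0 ≤ L := le_trans (by simpa using hA0 1) (le_csSup hbdd hS1)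
  have hALe : ∀ t : ℝ, 0 ≤ t → A t ≤ L * t := by
    intro t ht
    rcases eq_or_lt_of_le ht with h | h
    · rw [← h, h0, mul_zero]
    · have : A t / t ≤ L := le_csSup hbdd ⟨t, h, rfl⟩
      rw [div_le_iff₀ h] at this
      linarith [this]
  -- Fekete-type lower bound
  have hlow : ∀ t₀ : ℝ, 0 < t₀ → ∀ v : ℝ, 0 < v → v ≤ t₀ →
      A t₀ / t₀ - L * v / t₀ ≤ A v / v := by
    intro t₀ ht₀ v hv hvt₀
    set n : ℕ := ⌊t₀ / v⌋₊ with hn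
    have hn1 : (1 : ℝ) ≤ n := by
      have : (1 : ℕ) ≤ n := Nat.le_floor (by rw [Nat.cast_one, le_div_iff₀ hv, one_mul]; exact hvt₀)
      exact_mod_cast this
    have hnv : (n : ℝ) * v ≤ t₀ := by
      have := Nat.floor_le (show 0 ≤ t₀ / v by positivity)
      rw [← le_div_iff₀ hv]; exact this
    have hrv : t₀ - (n : ℝ) * v < v := by
      have := Nat.lt_floor_add_one (t₀ / v)
      rw [div_lt_iff₀ hv] at this
      nlinarith
    have hr0 : 0 ≤ t₀ - (n : ℝ) * v := by linarith
    have key : A t₀ ≤ (n : ℝ) * A v + L * v := by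
      have h1 : A t₀ = A ((n : ℝ) * v + (t₀ - (n : ℝ) * v)) := by ring_nf
      have h2 := stieltjes_iter A hsub n v (t₀ - (n : ℝ) * v) hv.le hr0
      have h3 : A (t₀ - (n : ℝ) * v) ≤ L * (t₀ - (n : ℝ) * v) := hALe _ hr0
      have h4 : L * (t₀ - (n : ℝ) * v) ≤ L * v := by nlinarith
      rw [h1]; linarith
    rw [div_sub_div_same] at *
    rw [div_le_div_iff₀ ht₀ hv]
    have hAv := hA0 v
    nlinarith [mul_le_mul_of_nonneg_left hnv hAv]
  -- the limit of A v / v as v → 0+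
  have hlim : Tendsto (fun v => A v / v) (nhdsWithin 0 (Ioi (0:ℝ))) (nhds L) := by
    rw [tendsto_order]
    constructor
    · intro a ha
      obtain ⟨x, hxS, hax⟩ := exists_lt_of_lt_csSup ⟨_, hS1⟩ ha
      obtain ⟨t₀, ht₀, rfl⟩ := hxS
      set δ : ℝ := min t₀ ((A t₀ / t₀ - a) * t₀ / (L + 1)) with hδ
      have hca : 0 < A t₀ / t₀ - a := by linarith
      have hδpos : 0 < δ := lt_min ht₀ (by positivity)
      filter_upwards [Ioo_mem_nhdsGT_of_mem (by exact ⟨le_refl 0, hδpos⟩ : (0:ℝ) ∈ Ico 0 δ)]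
        with v hv
      have h1 := hlow t₀ ht₀ v hv.1 (hv.2.le.trans (min_le_left _ _))
      have h2 : v < (A t₀ / t₀ - a) * t₀ / (L + 1) := lt_of_lt_of_le hv.2 (min_le_right _ _)
      have h2' : v * (L + 1) < (A t₀ / t₀ - a) * t₀ := by
        rw [lt_div_iff₀ (by positivity)] at h2; exact h2
      have h3 : L * v / t₀ < A t₀ / t₀ - a := by
        rw [div_lt_iff₀ ht₀]
        nlinarith [hv.1]
      linarith
    · intro b hb
      filter_upwards [self_mem_nhdsWithin] with v hv
      have : A v / v ≤ L := le_csSup hbdd ⟨v, hv, rfl⟩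
      linarith
  -- the key identity: for α ≥ 1,
  -- α * ∫ t in Ioi 0, exp (-(α t)) ∂A.measure = ∫ u in Ioi 0, α * exp (-u) * A (u / α)
  have hAmeas : Measurable A := A.mono.measurable
  have gammaInt : IntegrableOn (fun x : ℝ => Real.exp (-x) * x) (Ioi 0) := by
    have := Real.GammaIntegral_convergent (s := 2) (by norm_num)
    have e : (2:ℝ) - 1 = 1 := by norm_num
    rw [e] at this
    simpa [Real.rpow_one] using this
  have key : ∀ α : ℝ, 1 ≤ α →
      α * ∫ t in Ioi (0 : ℝ), Real.exp (-(α * t)) ∂A.measure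
        = ∫ u in Ioi (0 : ℝ), α * Real.exp (-u) * A (u / α) := by
    intro α hα
    have hα0 : (0 : ℝ) < α := lt_of_lt_of_le one_pos hα
    -- step 1 : Fubini on the lintegral level
    have hIntOn : IntegrableOn (fun s => α * Real.exp (-(α * s)) * A s) (Ioi 0) := by
      refine Integrable.mono (g := fun s => (α * L) * (Real.exp (-s) * s)) (gammaInt.const_mul _)
        ?_ ?_
      · exact (((measurable_const.mul
          ((Real.measurable_exp.comp ((measurable_id.const_mul α).neg)))).mul
          hAmeas).aestronglyMeasurable)
      · filter_upwards [ae_restrict_mem measurableSet_Ioi] with s hs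
        have hs0 : (0:ℝ) < s := hs
        have he : Real.exp (-(α * s)) ≤ Real.exp (-s) := by
          apply Real.exp_le_exp.2; nlinarith
        have h1 : α * Real.exp (-(α * s)) * A s ≤ α * L * (Real.exp (-s) * s) := by
          have hAs := hALe s hs0.le
          have hAs0 := hA0 s
          have b1 : Real.exp (-(α * s)) * A s ≤ Real.exp (-s) * A s :=
            mul_le_mul_of_nonneg_right he hAs0
          have b2 : Real.exp (-s) * A s ≤ Real.exp (-s) * (L * s) :=
            mul_le_mul_of_nonneg_left hAs (Real.exp_pos _).le
          have b3 := mul_le_mul_of_nonneg_left (b1.trans b2) hα0.le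
          nlinarith [b3]
        rw [Real.norm_eq_abs, Real.norm_eq_abs,
          abs_of_nonneg (mul_nonneg (by positivity) (hA0 s)),
          abs_of_nonneg (mul_nonneg (by positivity) (mul_nonneg (Real.exp_pos _).le hs0.le))]
        exact h1
    have step1 : ∫ t in Ioi (0 : ℝ), Real.exp (-(α * t)) ∂A.measure
        = ∫ s in Ioi (0 : ℝ), α * Real.exp (-(α * s)) * A s := by
      have hsf : SigmaFinite A.measure := by infer_instance
      have hc : Continuous fun t : ℝ => Real.exp (-(α * t)) :=
        Real.continuous_exp.comp (continuous_const.mul continuous_id).neg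
      have hL1 : ∫ t in Ioi (0:ℝ), Real.exp (-(α * t)) ∂A.measure
          = (∫⁻ t in Ioi (0:ℝ), ENNReal.ofReal (Real.exp (-(α * t))) ∂A.measure).toReal := by
        rw [integral_eq_lintegral_of_nonneg_ae
          (Eventually.of_forall fun t => (Real.exp_pos _).le) hc.aestronglyMeasurable]
      have hL2 : ∫ s in Ioi (0:ℝ), α * Real.exp (-(α * s)) * A s
          = (∫⁻ s in Ioi (0:ℝ), ENNReal.ofReal (α * Real.exp (-(α * s)) * A s)).toReal := by
        rw [integral_eq_lintegral_of_nonneg_ae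
          (Eventually.of_forall fun s => mul_nonneg (by positivity) (hA0 s))
          hIntOn.aestronglyMeasurable]
      rw [hL1, hL2]
      congr 1
      have hker : Measurable (Function.uncurry fun t s : ℝ =>
          (Ici t).indicator (fun s' => ENNReal.ofReal (α * Real.exp (-(α * s')))) s) := by
        have hrepr : (Function.uncurry fun t s : ℝ =>
            (Ici t).indicator (fun s' => ENNReal.ofReal (α * Real.exp (-(α * s')))) s)
            = fun p : ℝ × ℝ => ENNReal.ofReal (α * Real.exp (-(α * p.2)))
              * {q : ℝ × ℝ | q.1 ≤ q.2}.indicator (fun _ => 1) p := by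
          ext p
          by_cases h : p.1 ≤ p.2 <;>
            simp [Function.uncurry, Set.indicator, h, Set.mem_Ici]
        rw [hrepr]
        exact (((Real.measurable_exp.comp
          ((measurable_snd.const_mul α).neg)).const_mul α).ennreal_ofReal).mul
          (measurable_const.indicator (measurableSet_le measurable_fst measurable_snd))
      have inner1 : ∀ t : ℝ, (∫⁻ s, (Ici t).indicator
          (fun s' => ENNReal.ofReal (α * Real.exp (-(α * s')))) s)
          = ENNReal.ofReal (Real.exp (-(α * t))) := by
        intro t
        rw [lintegral_indicator measurableSet_Ici]
        have hint : IntegrableOn (fun s => α * Real.exp (-(α * s))) (Ici t) := by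
          rw [integrableOn_Ici_iff_integrableOn_Ioi]
          have := (exp_neg_integrableOn_Ioi t hα0).const_mul α
          simpa [neg_mul, IntegrableOn] using this
        rw [← ofReal_integral_eq_lintegral_ofReal hint
          (Eventually.of_forall fun s => by positivity)]
        congr 1
        rw [MeasureTheory.integral_Ici_eq_integral_Ioi,
          integral_comp_mul_left_Ioi (fun u => α * Real.exp (-u)) t hα0,
          integral_const_mul, integral_exp_neg_Ioi, smul_eq_mul, ← mul_assoc,
          inv_mul_cancel₀ hα0.ne', one_mul]
      have inner2 : ∀ s : ℝ, (∫⁻ t in Ioi (0:ℝ), (Ici t).indicator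
          (fun s' => ENNReal.ofReal (α * Real.exp (-(α * s')))) s ∂A.measure)
          = ENNReal.ofReal (α * Real.exp (-(α * s))) * ENNReal.ofReal (A s) := by
        intro s
        have hrepr : (fun t : ℝ => (Ici t).indicator
            (fun s' => ENNReal.ofReal (α * Real.exp (-(α * s')))) s)
            = (Iic s).indicator (fun _ => ENNReal.ofReal (α * Real.exp (-(α * s)))) := by
          ext t
          by_cases h : t ≤ s <;>
            simp [Set.indicator, h, Set.mem_Ici, Set.mem_Iic]
        rw [hrepr, lintegral_indicator measurableSet_Iic, setLIntegral_const,
          Measure.restrict_apply measurableSet_Iic, Set.inter_comm, Set.Ioi_inter_Iic,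
          A.measure_Ioc, h0, sub_zero]
      calc ∫⁻ t in Ioi (0:ℝ), ENNReal.ofReal (Real.exp (-(α * t))) ∂A.measure
          = ∫⁻ t in Ioi (0:ℝ), (∫⁻ s, (Ici t).indicator
              (fun s' => ENNReal.ofReal (α * Real.exp (-(α * s')))) s) ∂A.measure :=
            lintegral_congr fun t => (inner1 t).symm
        _ = ∫⁻ s, (∫⁻ t in Ioi (0:ℝ), (Ici t).indicator
              (fun s' => ENNReal.ofReal (α * Real.exp (-(α * s')))) s ∂A.measure) :=
            lintegral_lintegral_swap hker.aemeasurable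
        _ = ∫⁻ s, ENNReal.ofReal (α * Real.exp (-(α * s))) * ENNReal.ofReal (A s) :=
            lintegral_congr inner2
        _ = ∫⁻ s, (Ioi (0:ℝ)).indicator
              (fun s' => ENNReal.ofReal (α * Real.exp (-(α * s')) * A s')) s := by
            apply lintegral_congr; intro s
            rcases le_or_gt s 0 with h | h
            · simp [Set.indicator, not_lt.2 h, hneg s h]
            · rw [Set.indicator_of_mem (Set.mem_Ioi.mpr h)]
              exact (ENNReal.ofReal_mul (by positivity)).symm
        _ = ∫⁻ s in Ioi (0:ℝ), ENNReal.ofReal (α * Real.exp (-(α * s)) * A s) :=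
            lintegral_indicator measurableSet_Ioi _
    rw [step1, ← integral_const_mul]
    -- change of variables u = α s
    have step3 : ∀ x ∈ Ioi (0:ℝ), α * (α * Real.exp (-(α * x)) * A x)
        = (fun u => α * (α * Real.exp (-u) * A (u / α))) (α * x) := by
      intro x hx
      simp only []
      rw [mul_div_cancel_left₀ _ hα0.ne']
    rw [setIntegral_congr_fun measurableSet_Ioi step3]
    rw [integral_comp_mul_left_Ioi (fun u => α * (α * Real.exp (-u) * A (u / α))) 0 hα0,
      mul_zero, smul_eq_mul, integral_const_mul, ← mul_assoc, inv_mul_cancel₀ hα0.ne', one_mul]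
  -- final limit via dominated convergence
  have hJ : Tendsto (fun α : ℝ => ∫ u in Ioi (0 : ℝ), α * Real.exp (-u) * A (u / α)) atTop
      (nhds L) := by
    have hint : ∫ u in Ioi (0:ℝ), L * (Real.exp (-u) * u) = L := by
      rw [integral_const_mul]
      have h2 : Real.Gamma 2 = ∫ x in Ioi (0:ℝ), Real.exp (-x) * x ^ ((2:ℝ) - 1) :=
        Real.Gamma_eq_integral (by norm_num)
      have h3 : Real.Gamma 2 = 1 := by
        rw [show (2:ℝ) = 1 + 1 by norm_num, Real.Gamma_add_one one_ne_zero, Real.Gamma_one,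
          mul_one]
      rw [show ∫ u in Ioi (0:ℝ), Real.exp (-u) * u
        = ∫ x in Ioi (0:ℝ), Real.exp (-x) * x ^ ((2:ℝ) - 1) by norm_num, ← h2, h3, mul_one]
    rw [show L = ∫ u in Ioi (0:ℝ), L * (Real.exp (-u) * u) from hint.symm]
    apply tendsto_integral_filter_of_dominated_convergence
      (bound := fun u => L * (Real.exp (-u) * u))
    · filter_upwards with α
      exact ((measurable_const.mul (Real.measurable_exp.comp measurable_neg)).mul
        (hAmeas.comp (measurable_id.div_const α))).aestronglyMeasurable
    · filter_upwards [eventually_ge_atTop (1:ℝ)] with α hα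
      filter_upwards [ae_restrict_mem measurableSet_Ioi] with u hu
      have hα0 : (0:ℝ) < α := lt_of_lt_of_le one_pos hα
      have hu0 : (0:ℝ) < u := hu
      have h1 : A (u / α) ≤ L * (u / α) := hALe _ (by positivity)
      have h2 : α * Real.exp (-u) * A (u / α) ≤ L * (Real.exp (-u) * u) := by
        have b1 : Real.exp (-u) * A (u / α) ≤ Real.exp (-u) * (L * (u / α)) :=
          mul_le_mul_of_nonneg_left h1 (Real.exp_pos _).le
        have b2 := mul_le_mul_of_nonneg_left b1 hα0.le
        have h4 : α * (Real.exp (-u) * (L * (u / α))) = L * (Real.exp (-u) * u) := by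
          field_simp
        linarith [b2, h4]
      rw [Real.norm_eq_abs, abs_of_nonneg (mul_nonneg (by positivity) (hA0 (u / α)))]
      exact h2
    · exact gammaInt.const_mul L
    · filter_upwards [ae_restrict_mem measurableSet_Ioi] with u hu
      have hu0 : (0:ℝ) < u := hu
      have h1 : Tendsto (fun α : ℝ => u / α) atTop (nhdsWithin 0 (Ioi 0)) := by
        apply tendsto_nhdsWithin_of_tendsto_nhds_of_eventually_within
        · exact Tendsto.const_div_atTop tendsto_id u
        · filter_upwards [eventually_gt_atTop (0:ℝ)] with α hα
          exact div_pos hu0 hα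
      have h2 : Tendsto (fun α : ℝ => A (u / α) / (u / α)) atTop (nhds L) := hlim.comp h1
      have h3 : Tendsto (fun α : ℝ => A (u / α) / (u / α) * (Real.exp (-u) * u)) atTop
          (nhds (L * (Real.exp (-u) * u))) := h2.mul_const _
      refine h3.congr' ?_
      filter_upwards [eventually_gt_atTop (0:ℝ)] with α hα
      field_simp
  refine hJ.congr' ?_
  filter_upwards [eventually_ge_atTop (1:ℝ)] with α hα
  exact (key α hα).symm
end
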